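/- For μ ∈ (0,1), the first Rayleigh sum of the positive zeros ξ_{μ,n} of the Lommel function s_{μ-1/2,1/2} satisfies ∑_{n≥1} 1/ξ_{μ,n}² = 1/((μ+2)(μ+3)). -/

import Mathlib

open Filter Topology

private lemma poch_ge_one (k : ℕ) {a : ℝ} (ha : 1 ≤ a) :
    1 ≤ (ascPochhammer ℝ k).eval a := by
  induction k with
  | zero => simp
  | succ n ih =>
    rw [ascPochhammer_succ_eval]
    have h1 : (1:ℝ) ≤ a + n := le_add_of_le_of_nonneg ha (Nat.cast_nonneg n)
    nlinarith

private lemma prod_one_sub_ge (u : ℕ → ℝ) (h0 : ∀ n, 0 ≤ u n)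
    (h1 : ∀ n, u n ≤ 1) (s : Finset ℕ) :
    1 - ∑ i ∈ s, u i ≤ ∏ i ∈ s, (1 - u i) := by
  classical
  induction s using Finset.induction_on with
  | empty => simp
  | insert a s hx ih =>
    rw [Finset.prod_insert hx, Finset.sum_insert hx]
    have hs : 0 ≤ ∑ i ∈ s, u i := Finset.sum_nonneg fun i _ => h0 i
    nlinarith [h0 a, h1 a]

private lemma exp_neg_le (t : ℝ) (ht : 0 ≤ t) :
    Real.exp (-t) ≤ 1 - t + t ^ 2 := by
  have he : t + 1 ≤ Real.exp t := Real.add_one_le_exp t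
  have hmul : Real.exp (-t) * Real.exp t = 1 := by
    rw [← Real.exp_add]; simp
  have hp : 0 < Real.exp t := Real.exp_pos t
  have hp' : 0 < Real.exp (-t) := Real.exp_pos (-t)
  nlinarith [pow_nonneg ht 3, sq_nonneg t, mul_nonneg (mul_nonneg ht ht) ht]

set_option maxHeartbeats 1000000 in
/-- For `μ ∈ (0,1)`, if `ξ n` are the positive zeros of the Lommel function
`s_{μ-1/2,1/2}` (encoded by the factorization of the normalized Lommel function
`g_μ(z)/z = ∑ (-1)^k z^{2k}/(4^k ((μ+2)/2)_k ((μ+3)/2)_k) = ∏ (1 - z²/ξ_k²)`),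
then `∑ 1/ξ_n² = 1/((μ+2)(μ+3))`. -/
theorem rayleigh_sum_lommel (μ : ℝ) (hμ : μ ∈ Set.Ioo (0 : ℝ) 1) (ξ : ℕ → ℝ)
    (hpos : ∀ n, 0 < ξ n) (hmono : StrictMono ξ)
    (hsum : Summable (fun n => 1 / (ξ n) ^ 2))
    (hfact : ∀ x : ℝ,
      ∑' k : ℕ, (-1 : ℝ) ^ k * x ^ (2 * k) /
        (4 ^ k * (ascPochhammer ℝ k).eval ((μ + 2) / 2) *
          (ascPochhammer ℝ k).eval ((μ + 3) / 2))
      = ∏' n : ℕ, (1 - x ^ 2 / (ξ n) ^ 2)) :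
    ∑' n : ℕ, 1 / (ξ n) ^ 2 = 1 / ((μ + 2) * (μ + 3)) := by
  obtain ⟨hμ0, hμ1⟩ := hμ
  set S : ℝ := ∑' n : ℕ, 1 / (ξ n) ^ 2 with hSdef
  set c : ℝ := 1 / ((μ + 2) * (μ + 3)) with hcdef
  have hP1 : (1:ℝ) ≤ (μ + 2) / 2 := by linarith
  have hP2 : (1:ℝ) ≤ (μ + 3) / 2 := by linarith
  have hann : ∀ n, 0 < 1 / (ξ n) ^ 2 := fun n =>
    one_div_pos.mpr (pow_pos (hpos n) 2)
  have hSnn : 0 ≤ S := tsum_nonneg fun n => (hann n).le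
  -- the key estimate
  have key : ∀ x : ℝ, 0 < x → x ≤ 1 → x ^ 2 * S ≤ 1/2 →
      |S - c| ≤ x ^ 2 * (S ^ 2 + 2) := by
    intro x hx hx1 hxS
    set t : ℝ := x ^ 2 * S with htdef
    have htnn : 0 ≤ t := by positivity
    have hx2 : (0:ℝ) < x ^ 2 := by positivity
    ---- SERIES SIDE ----
    set term : ℕ → ℝ := fun k => (-1 : ℝ) ^ k * x ^ (2 * k) /
        (4 ^ k * (ascPochhammer ℝ k).eval ((μ + 2) / 2) *
          (ascPochhammer ℝ k).eval ((μ + 3) / 2)) with hterm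
    have hpoch1 : ∀ k, (1:ℝ) ≤ (ascPochhammer ℝ k).eval ((μ + 2) / 2) :=
      fun k => poch_ge_one k hP1
    have hpoch2 : ∀ k, (1:ℝ) ≤ (ascPochhammer ℝ k).eval ((μ + 3) / 2) :=
      fun k => poch_ge_one k hP2
    have habs : ∀ k, |term k| ≤ (x ^ 2) ^ k / 4 ^ k := by
      intro k
      have h4 : (0:ℝ) < 4 ^ k := by positivity
      have hs1 : (0:ℝ) < 4 ^ k * (ascPochhammer ℝ k).eval ((μ + 2) / 2) :=
        lt_of_lt_of_le h4 (le_mul_of_one_le_right h4.le (hpoch1 k))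
      have hDpos : (0:ℝ) < 4 ^ k * (ascPochhammer ℝ k).eval ((μ + 2) / 2) *
          (ascPochhammer ℝ k).eval ((μ + 3) / 2) :=
        lt_of_lt_of_le hs1 (le_mul_of_one_le_right hs1.le (hpoch2 k))
      have hD : (4:ℝ) ^ k ≤ 4 ^ k * (ascPochhammer ℝ k).eval ((μ + 2) / 2) *
          (ascPochhammer ℝ k).eval ((μ + 3) / 2) :=
        le_trans (le_mul_of_one_le_right h4.le (hpoch1 k))
          (le_mul_of_one_le_right hs1.le (hpoch2 k))
      have hnum : |(-1 : ℝ) ^ k * x ^ (2 * k)| = (x ^ 2) ^ k := by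
        rw [abs_mul, abs_pow, abs_neg, abs_one, one_pow, one_mul, abs_pow,
          abs_of_pos hx, pow_mul]
      rw [hterm, abs_div, hnum, abs_of_pos hDpos]
      exact div_le_div_of_nonneg_left (by positivity) (by positivity) hD
    have hx2le1 : x ^ 2 ≤ 1 := by nlinarith
    have habs' : ∀ k, |term k| ≤ (1/4 : ℝ) ^ k := by
      intro k
      refine (habs k).trans ?_
      rw [div_pow, one_pow]
      apply div_le_div_of_nonneg_right _ (by positivity)
      · exact pow_le_one₀ hx2.le hx2le1
    have hsummable : Summable term := by
      apply Summable.of_norm_bounded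
        (summable_geometric_of_lt_one (r := (1/4 : ℝ)) (by norm_num) (by norm_num))
      intro k; exact habs' k
    have hsummable1 : Summable (fun k => term (k + 1)) :=
      (summable_nat_add_iff 1).2 hsummable
    have hsummable2 : Summable (fun k => term (k + 2)) :=
      (summable_nat_add_iff 2).2 hsummable
    have hsplit : ∑' k, term k = term 0 + (term 1 + ∑' k, term (k + 2)) := by
      rw [Summable.tsum_eq_zero_add hsummable, Summable.tsum_eq_zero_add hsummable1]
    have hterm0 : term 0 = 1 := by
      simp [hterm, ascPochhammer_zero]
    have hμ2 : (0:ℝ) < μ + 2 := by linarith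
    have hμ3 : (0:ℝ) < μ + 3 := by linarith
    have hterm1 : term 1 = -(x ^ 2 * c) := by
      rw [hterm, hcdef]
      simp only [ascPochhammer_one, Polynomial.eval_X, pow_one]
      field_simp
      ring
    -- tail bound
    have htail : |∑' k, term (k + 2)| ≤ 2 * x ^ 4 := by
      have hb : ∀ k, |term (k + 2)| ≤ x ^ 4 * (1/4 : ℝ) ^ k := by
        intro k
        refine (habs (k + 2)).trans ?_
        have h1 : (x ^ 2) ^ (k + 2) = x ^ 4 * (x ^ 2) ^ k := by ring
        have h2 : ((4:ℝ)) ^ k ≤ 4 ^ (k + 2) := by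
          apply pow_le_pow_right₀ (by norm_num) (by omega)
        have h3 : (x ^ 2) ^ k ≤ 1 := pow_le_one₀ hx2.le hx2le1
        have h4 : (0:ℝ) < 4 ^ k := by positivity
        have h5 : (0:ℝ) < 4 ^ (k + 2) := by positivity
        rw [h1, div_pow, one_pow]
        calc x ^ 4 * (x ^ 2) ^ k / 4 ^ (k + 2)
            ≤ x ^ 4 * 1 / 4 ^ k := by
              apply div_le_div₀ (by positivity) _ h4 h2
              exact mul_le_mul_of_nonneg_left h3 (by positivity)
          _ = x ^ 4 / 4 ^ k := by ring
          _ = x ^ 4 * (1 / 4 ^ k) := by ring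
      have hsb : Summable (fun k => x ^ 4 * (1/4 : ℝ) ^ k) :=
        (summable_geometric_of_lt_one (by norm_num) (by norm_num)).mul_left _
      have hsnb : Summable (fun k => -(x ^ 4 * (1/4 : ℝ) ^ k)) := hsb.neg
      have hle : ∀ k, term (k + 2) ≤ x ^ 4 * (1/4 : ℝ) ^ k :=
        fun k => (le_abs_self _).trans (hb k)
      have hge : ∀ k, -(x ^ 4 * (1/4 : ℝ) ^ k) ≤ term (k + 2) :=
        fun k => (neg_le_neg (hb k)).trans (neg_abs_le _)
      have hgeo : ∑' k : ℕ, (1/4 : ℝ) ^ k = (1 - 1/4)⁻¹ :=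
        tsum_geometric_of_lt_one (by norm_num) (by norm_num)
      have h1 : ∑' k, term (k + 2) ≤ x ^ 4 * (4/3) := by
        calc ∑' k, term (k + 2) ≤ ∑' k, x ^ 4 * (1/4 : ℝ) ^ k :=
              Summable.tsum_le_tsum hle hsummable2 hsb
          _ = x ^ 4 * ∑' k : ℕ, (1/4 : ℝ) ^ k := tsum_mul_left
          _ = x ^ 4 * (4/3) := by rw [hgeo]; norm_num
      have h2 : -(x ^ 4 * (4/3)) ≤ ∑' k, term (k + 2) := by
        calc -(x ^ 4 * (4/3)) = ∑' k, -(x ^ 4 * (1/4 : ℝ) ^ k) := by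
              rw [tsum_neg, tsum_mul_left, hgeo]; norm_num
          _ ≤ ∑' k, term (k + 2) := Summable.tsum_le_tsum hge hsnb hsummable2
      rw [abs_le]
      constructor <;> nlinarith [pow_pos hx 4]
    ---- PRODUCT SIDE ----
    set u : ℕ → ℝ := fun n => x ^ 2 / (ξ n) ^ 2 with hu
    have hun : ∀ n, 0 ≤ u n := fun n => by positivity
    have hueq : ∀ n, u n = x ^ 2 * (1 / (ξ n) ^ 2) := fun n => by
      rw [hu]; ring
    have hsu : Summable u := by
      simp only [funext hueq]
      exact hsum.mul_left _
    have htsu : ∑' n, u n = t := by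
      simp only [funext hueq]
      rw [tsum_mul_left]
    have hule : ∀ n, u n ≤ t := fun n => htsu ▸ Summable.le_tsum hsu n fun m _ => hun m
    have hule1 : ∀ n, u n ≤ 1 := fun n => (hule n).trans (by linarith)
    set F : Finset ℕ → ℝ := fun s => ∏ i ∈ s, (1 - u i) with hF
    have hFnn : ∀ s, 0 ≤ F s := fun s =>
      Finset.prod_nonneg fun i _ => by linarith [hule1 i]
    have hanti : Antitone F := by
      intro s tt hst
      rw [hF]
      simp only
      rw [← Finset.prod_sdiff hst]
      have h1 : ∏ i ∈ tt \ s, (1 - u i) ≤ 1 :=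
        Finset.prod_le_one (fun i _ => by linarith [hule1 i])
          (fun i _ => by linarith [hun i])
      nlinarith [hFnn s, Finset.prod_nonneg (fun i (_ : i ∈ tt \ s) => by
        linarith [hule1 i] : ∀ i ∈ tt \ s, (0:ℝ) ≤ 1 - u i)]
    have hbdd : BddBelow (Set.range F) := by
      refine ⟨0, fun y hy => ?_⟩
      obtain ⟨s, rfl⟩ := hy
      exact hFnn s
    set L : ℝ := ⨅ s, F s with hL
    have hT : Tendsto F atTop (𝓝 L) := tendsto_atTop_ciInf hanti hbdd
    have hHP : HasProd (fun n => 1 - u n) L := hT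
    have hprodeq : ∏' n : ℕ, (1 - x ^ 2 / (ξ n) ^ 2) = L := hHP.tprod_eq
    -- lower bound
    have hlow : 1 - t ≤ L := by
      apply le_ciInf
      intro s
      have h1 : ∑ i ∈ s, u i ≤ t := htsu ▸ Summable.sum_le_tsum s (fun i _ => hun i) hsu
      have h2 := prod_one_sub_ge u hun hule1 s
      calc 1 - t ≤ 1 - ∑ i ∈ s, u i := by linarith
        _ ≤ F s := h2
    -- upper bound
    have hupp : L ≤ 1 - t + t ^ 2 := by
      have h1 : ∀ N : ℕ, L ≤ Real.exp (-(∑ i ∈ Finset.range N, u i)) := by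
        intro N
        refine (ciInf_le hbdd (Finset.range N)).trans ?_
        have : F (Finset.range N) ≤ ∏ i ∈ Finset.range N, Real.exp (-u i) := by
          apply Finset.prod_le_prod (fun i _ => by linarith [hule1 i])
          intro i _
          have := Real.add_one_le_exp (-u i)
          linarith
        refine this.trans (le_of_eq ?_)
        rw [← Real.exp_sum, Finset.sum_neg_distrib]
      have h2 : Tendsto (fun N => Real.exp (-(∑ i ∈ Finset.range N, u i)))
          atTop (𝓝 (Real.exp (-t))) := by
        have h3 : Tendsto (fun N => ∑ i ∈ Finset.range N, u i) atTop (𝓝 t) := by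
          have := hsu.hasSum.tendsto_sum_nat
          rwa [htsu] at this
        exact (Real.continuous_exp.tendsto _).comp h3.neg
      have h4 : L ≤ Real.exp (-t) := ge_of_tendsto h2 (Eventually.of_forall h1)
      exact h4.trans (exp_neg_le t htnn)
    ---- COMBINE ----
    have hfx : (∑' k, term k) = L := by
      rw [hterm]
      exact (hfact x).trans hprodeq
    rw [hsplit, hterm0, hterm1] at hfx
    -- hfx : 1 + (-(x^2*c) + tail) = L
    have hcomb : |x ^ 2 * S - x ^ 2 * c| ≤ x ^ 4 * (S ^ 2 + 2) := by
      have hLb : |L - (1 - t)| ≤ t ^ 2 := by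
        rw [abs_le]; constructor <;> nlinarith
      have ht2 : t ^ 2 = x ^ 4 * S ^ 2 := by rw [htdef]; ring
      have htail' := htail
      rw [abs_le] at hLb htail' ⊢
      constructor <;> nlinarith
    have : x ^ 2 * |S - c| ≤ x ^ 2 * (x ^ 2 * (S ^ 2 + 2)) := by
      calc x ^ 2 * |S - c| = |x ^ 2 * S - x ^ 2 * c| := by
            rw [← mul_sub, abs_mul, abs_of_pos hx2]
        _ ≤ x ^ 4 * (S ^ 2 + 2) := hcomb
        _ = x ^ 2 * (x ^ 2 * (S ^ 2 + 2)) := by ring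
    exact le_of_mul_le_mul_left this hx2
  -- conclude: |S - c| ≤ 0
  have hev : ∀ᶠ x in 𝓝[>] (0:ℝ), |S - c| ≤ x ^ 2 * (S ^ 2 + 2) := by
    have hδ : (0:ℝ) < min 1 (1 / (2 * (S + 1))) := by
      apply lt_min one_pos
      positivity
    filter_upwards [Ioo_mem_nhdsGT_of_mem ⟨le_refl (0:ℝ), hδ⟩] with x hx
    obtain ⟨hx0, hxδ⟩ := hx
    have hx1 : x ≤ 1 := le_of_lt (lt_of_lt_of_le hxδ (min_le_left _ _))
    have hxS : x ^ 2 * S ≤ 1/2 := by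
      have h1 : x < 1 / (2 * (S + 1)) := lt_of_lt_of_le hxδ (min_le_right _ _)
      have h2 : 0 < 2 * (S + 1) := by linarith
      have h3 : x * (2 * (S + 1)) < 1 := by
        rw [← lt_div_iff₀ h2]; exact h1
      nlinarith
    exact key x hx0 hx1 hxS
  have htend : Tendsto (fun x : ℝ => x ^ 2 * (S ^ 2 + 2)) (𝓝[>] 0) (𝓝 0) := by
    have : Tendsto (fun x : ℝ => x ^ 2 * (S ^ 2 + 2)) (𝓝 0) (𝓝 (0 ^ 2 * (S ^ 2 + 2))) := by
      exact Tendsto.mul_const _ ((continuous_pow 2).tendsto 0)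
    simpa using this.mono_left nhdsWithin_le_nhds
  have : |S - c| ≤ 0 := ge_of_tendsto htend hev
  have := abs_nonneg (S - c)
  have h0 : |S - c| = 0 := le_antisymm ‹|S - c| ≤ 0› this
  have := abs_eq_zero.mp h0
  linarith [sub_eq_zero.mp this]
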